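/- arXiv:2210.15528 — 2 statements merged into one kernel-verified Lean document; each statement's English description precedes it below -/
import Mathlib

section
/- Assume the kernel κ : ℝ^d × ℝ^d → ℝ is Lipschitz continuous with constant L_κ (with respect to the Euclidean norm on ℝ^d × ℝ^d), and that 𝒦 + σ_n² I_N is invertible. Then the GP posterior mean μ is Lipschitz continuous on ℝ^d with Lipschitz constant L_κ · √N · ‖(𝒦 + σ_n² I_N)⁻¹ y‖, i.e. |μ(x) − μ(x′)| ≤ L_κ √N ‖(𝒦 + σ_n² I_N)⁻¹ y‖ · ‖x − x′‖ for all x, x′ ∈ ℝ^d. -/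
open Matrix

/-- Euclidean norm of a vector in `Fin N → ℝ`. -/
noncomputable def eNorm {N : ℕ} (v : Fin N → ℝ) : ℝ :=
  ‖(WithLp.equiv 2 (Fin N → ℝ)).symm v‖

/-- Gram matrix of a kernel on the training inputs. -/
noncomputable def gram {d N : ℕ}
    (κ : EuclideanSpace ℝ (Fin d) → EuclideanSpace ℝ (Fin d) → ℝ)
    (xs : Fin N → EuclideanSpace ℝ (Fin d)) : Matrix (Fin N) (Fin N) ℝ :=
  Matrix.of fun k h => κ (xs k) (xs h)

/-- Kernel vector at a test point. -/
noncomputable def kvec {d N : ℕ}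
    (κ : EuclideanSpace ℝ (Fin d) → EuclideanSpace ℝ (Fin d) → ℝ)
    (xs : Fin N → EuclideanSpace ℝ (Fin d)) (x : EuclideanSpace ℝ (Fin d)) :
    Fin N → ℝ :=
  fun k => κ x (xs k)

/-- GP posterior mean. -/
noncomputable def postMean {d N : ℕ}
    (κ : EuclideanSpace ℝ (Fin d) → EuclideanSpace ℝ (Fin d) → ℝ)
    (xs : Fin N → EuclideanSpace ℝ (Fin d)) (σn2 : ℝ) (y : Fin N → ℝ)
    (x : EuclideanSpace ℝ (Fin d)) : ℝ :=
  kvec κ xs x ⬝ᵥ ((gram κ xs + σn2 • (1 : Matrix (Fin N) (Fin N) ℝ))⁻¹ *ᵥ y)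

/-- Cauchy–Schwarz for real dot products via `eNorm`. -/
theorem eNorm_dotProduct_le {N : ℕ} (v w : Fin N → ℝ) :
    |v ⬝ᵥ w| ≤ eNorm v * eNorm w := by
  have := abs_real_inner_le_norm ((WithLp.equiv 2 (Fin N → ℝ)).symm v)
    ((WithLp.equiv 2 (Fin N → ℝ)).symm w)
  simpa [eNorm, PiLp.inner_apply, dotProduct, RCLike.inner_apply, mul_comm] using this

/-- Componentwise bound implies Euclidean norm bound `√N * t`. -/
theorem eNorm_le_of_forall_abs_le {N : ℕ} (v : Fin N → ℝ) (t : ℝ) (ht : 0 ≤ t)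
    (h : ∀ k, |v k| ≤ t) : eNorm v ≤ Real.sqrt N * t := by
  rw [eNorm, EuclideanSpace.norm_eq]
  have hsum : ∑ i, ‖((WithLp.equiv 2 (Fin N → ℝ)).symm v) i‖ ^ 2 ≤ N * t ^ 2 := by
    calc ∑ i, ‖((WithLp.equiv 2 (Fin N → ℝ)).symm v) i‖ ^ 2
        ≤ ∑ _i : Fin N, t ^ 2 := by
          apply Finset.sum_le_sum
          intro i _
          simpa [Real.norm_eq_abs, sq_abs] using pow_le_pow_left₀ (abs_nonneg _) (h i) 2
      _ = N * t ^ 2 := by simp [Finset.sum_const, mul_comm]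
  calc Real.sqrt (∑ i, ‖((WithLp.equiv 2 (Fin N → ℝ)).symm v) i‖ ^ 2)
      ≤ Real.sqrt (N * t ^ 2) := Real.sqrt_le_sqrt hsum
    _ = Real.sqrt N * t := by
        rw [Real.sqrt_mul (Nat.cast_nonneg N), Real.sqrt_sq ht]

/-- If the kernel is `Lκ`-Lipschitz with respect to the Euclidean norm on
`ℝ^d × ℝ^d` and the regularized Gram matrix is invertible, then the GP posterior mean is
Lipschitz with constant `Lκ √N ‖(𝒦 + σₙ² I)⁻¹ y‖`. -/
theorem posterior_mean_lipschitz {d N : ℕ}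
    (κ : EuclideanSpace ℝ (Fin d) → EuclideanSpace ℝ (Fin d) → ℝ)
    (xs : Fin N → EuclideanSpace ℝ (Fin d)) (y : Fin N → ℝ)
    (σn2 : ℝ) (Lκ : ℝ)
    (hLip : ∀ x x' x₁ x₁' : EuclideanSpace ℝ (Fin d),
      |κ x x' - κ x₁ x₁'| ≤ Lκ * Real.sqrt (‖x - x₁‖ ^ 2 + ‖x' - x₁'‖ ^ 2))
    (hInv : IsUnit (gram κ xs + σn2 • (1 : Matrix (Fin N) (Fin N) ℝ))) :
    ∀ x x' : EuclideanSpace ℝ (Fin d),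
      |postMean κ xs σn2 y x - postMean κ xs σn2 y x'| ≤
        Lκ * Real.sqrt N *
          eNorm ((gram κ xs + σn2 • (1 : Matrix (Fin N) (Fin N) ℝ))⁻¹ *ᵥ y) *
          ‖x - x'‖ := by
  intro x x'
  set w : Fin N → ℝ := (gram κ xs + σn2 • (1 : Matrix (Fin N) (Fin N) ℝ))⁻¹ *ᵥ y with hw
  set v : Fin N → ℝ := fun k => kvec κ xs x k - kvec κ xs x' k with hv
  have hdiff : postMean κ xs σn2 y x - postMean κ xs σn2 y x' = v ⬝ᵥ w := by
    simp [postMean, dotProduct, hv, hw, sub_mul, Finset.sum_sub_distrib]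
  have hvk : ∀ k, |v k| ≤ Lκ * ‖x - x'‖ := by
    intro k
    have h := hLip x (xs k) x' (xs k)
    simpa [hv, kvec, Real.sqrt_sq (norm_nonneg (x - x'))] using h
  have hwn : 0 ≤ eNorm w := norm_nonneg _
  rcases eq_or_ne x x' with rfl | hne
  · simp [hdiff, hv]
  · have hxx : 0 < ‖x - x'‖ := by
      simpa [sub_eq_zero] using norm_pos_iff.mpr (sub_ne_zero.mpr hne)
    rcases Nat.eq_zero_or_pos N with rfl | hN
    · simp [hdiff, dotProduct]
    · have ht : 0 ≤ Lκ * ‖x - x'‖ :=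
        le_trans (abs_nonneg _) (hvk ⟨0, hN⟩)
      have h1 : |v ⬝ᵥ w| ≤ eNorm v * eNorm w := eNorm_dotProduct_le v w
      have h2 : eNorm v ≤ Real.sqrt N * (Lκ * ‖x - x'‖) :=
        eNorm_le_of_forall_abs_le v _ ht hvk
      calc |postMean κ xs σn2 y x - postMean κ xs σn2 y x'|
          = |v ⬝ᵥ w| := by rw [hdiff]
        _ ≤ eNorm v * eNorm w := h1
        _ ≤ (Real.sqrt N * (Lκ * ‖x - x'‖)) * eNorm w :=
            mul_le_mul_of_nonneg_right h2 hwn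
        _ = Lκ * Real.sqrt N * eNorm w * ‖x - x'‖ := by ring
end

section
/- Let 𝒳 ⊆ ℝ^d contain the training inputs x^1, …, x^N. Assume the kernel κ : ℝ^d × ℝ^d → ℝ is Lipschitz continuous with constant L_κ (with respect to the Euclidean norm on ℝ^d × ℝ^d), that |κ(x, x′)| ≤ κ_max for all x, x′ ∈ 𝒳, and that 𝒦 + σ_n² I_N is invertible. Then for all x, x′ ∈ 𝒳 the GP posterior variance satisfies |σ²(x) − σ²(x′)| ≤ 2 L_κ (1 + N ‖(𝒦 + σ_n² I_N)⁻¹‖ κ_max) · ‖x − x′‖. -/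
open Matrix

/-- Operator norm of a matrix induced by the Euclidean norm. -/
noncomputable def matOpNorm {N : ℕ} (M : Matrix (Fin N) (Fin N) ℝ) : ℝ :=
  ‖Matrix.toEuclideanCLM (𝕜 := ℝ) M‖

lemma dot_mulVec_bound {N : ℕ} (M : Matrix (Fin N) (Fin N) ℝ) (u v : Fin N → ℝ) :
    |u ⬝ᵥ (M *ᵥ v)| ≤ ‖(WithLp.equiv 2 (Fin N → ℝ)).symm u‖ * (matOpNorm M *
      ‖(WithLp.equiv 2 (Fin N → ℝ)).symm v‖) := by
  have h1 : u ⬝ᵥ (M *ᵥ v) = inner ℝ ((WithLp.equiv 2 (Fin N → ℝ)).symm u)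
      ((Matrix.toEuclideanCLM (𝕜 := ℝ) M) ((WithLp.equiv 2 (Fin N → ℝ)).symm v)) := by
    exact (Matrix.inner_toEuclideanCLM M _ _).symm
  rw [h1]
  refine le_trans (abs_real_inner_le_norm _ _) ?_
  gcongr
  exact (Matrix.toEuclideanCLM (𝕜 := ℝ) M).le_opNorm _

lemma norm_le_of_ptwise {N : ℕ} (v : Fin N → ℝ) (c : ℝ) (hc : 0 ≤ c)
    (h : ∀ i, |v i| ≤ c) :
    ‖(WithLp.equiv 2 (Fin N → ℝ)).symm v‖ ≤ Real.sqrt N * c := by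
  rw [EuclideanSpace.norm_eq]
  have : ∑ i, ‖((WithLp.equiv 2 (Fin N → ℝ)).symm v) i‖ ^ 2 ≤ N * c ^ 2 := by
    calc ∑ i, ‖((WithLp.equiv 2 (Fin N → ℝ)).symm v) i‖ ^ 2 ≤ ∑ _i : Fin N, c ^ 2 := by
          apply Finset.sum_le_sum
          intro i _
          have hvi : ((WithLp.equiv 2 (Fin N → ℝ)).symm v) i = v i := rfl
          rw [hvi, Real.norm_eq_abs]
          exact pow_le_pow_left₀ (abs_nonneg _) (h i) 2
      _ = N * c ^ 2 := by simp [mul_comm]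
  calc Real.sqrt (∑ i, ‖((WithLp.equiv 2 (Fin N → ℝ)).symm v) i‖ ^ 2)
      ≤ Real.sqrt (N * c ^ 2) := Real.sqrt_le_sqrt this
    _ = Real.sqrt N * c := by
        rw [Real.sqrt_mul (by positivity), Real.sqrt_sq hc]

/-- GP posterior variance. -/
noncomputable def postVar {d N : ℕ}
    (κ : EuclideanSpace ℝ (Fin d) → EuclideanSpace ℝ (Fin d) → ℝ)
    (xs : Fin N → EuclideanSpace ℝ (Fin d)) (σn2 : ℝ)
    (x : EuclideanSpace ℝ (Fin d)) : ℝ :=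
  κ x x -
    kvec κ xs x ⬝ᵥ ((gram κ xs + σn2 • (1 : Matrix (Fin N) (Fin N) ℝ))⁻¹ *ᵥ kvec κ xs x)

/-- Lipschitz bound for the GP posterior variance on a set `𝒳` containing the
training inputs, for a Lipschitz kernel bounded by `κmax` on `𝒳`. -/
theorem posterior_variance_lipschitz {d N : ℕ}
    (𝒳 : Set (EuclideanSpace ℝ (Fin d)))
    (κ : EuclideanSpace ℝ (Fin d) → EuclideanSpace ℝ (Fin d) → ℝ)
    (xs : Fin N → EuclideanSpace ℝ (Fin d))
    (hxs : ∀ i, xs i ∈ 𝒳)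
    (σn2 : ℝ) (Lκ κmax : ℝ)
    (hLip : ∀ x x' x₁ x₁' : EuclideanSpace ℝ (Fin d),
      |κ x x' - κ x₁ x₁'| ≤ Lκ * Real.sqrt (‖x - x₁‖ ^ 2 + ‖x' - x₁'‖ ^ 2))
    (hbound : ∀ x ∈ 𝒳, ∀ x' ∈ 𝒳, |κ x x'| ≤ κmax)
    (hInv : IsUnit (gram κ xs + σn2 • (1 : Matrix (Fin N) (Fin N) ℝ))) :
    ∀ x ∈ 𝒳, ∀ x' ∈ 𝒳,
      |postVar κ xs σn2 x - postVar κ xs σn2 x'| ≤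
        2 * Lκ *
          (1 + N * matOpNorm (gram κ xs + σn2 • (1 : Matrix (Fin N) (Fin N) ℝ))⁻¹ * κmax) *
          ‖x - x'‖ := by
  intro x hx x' hx'
  by_cases hxx : x = x'
  · subst hxx; simp
  have hD : 0 < ‖x - x'‖ := by
    rw [norm_pos_iff]; exact sub_ne_zero_of_ne hxx
  set D : ℝ := ‖x - x'‖ with hDdef
  have hL : 0 ≤ Lκ := by
    have h1 := (abs_nonneg _).trans (hLip x x x' x)
    have h2 : Real.sqrt (‖x - x'‖ ^ 2 + ‖x - x‖ ^ 2) = D := by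
      simp [Real.sqrt_sq (norm_nonneg _), hDdef]
    rw [h2] at h1
    nlinarith
  have hκmax : 0 ≤ κmax := (abs_nonneg _).trans (hbound x hx x hx)
  set B := (gram κ xs + σn2 • (1 : Matrix (Fin N) (Fin N) ℝ))⁻¹ with hBdef
  have hB : 0 ≤ matOpNorm B := norm_nonneg _
  set u := kvec κ xs x with hudef
  set v := kvec κ xs x' with hvdef
  have hk : ∀ i, |u i| ≤ κmax := fun i => hbound x hx (xs i) (hxs i)
  have hk' : ∀ i, |v i| ≤ κmax := fun i => hbound x' hx' (xs i) (hxs i)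
  have hdk : ∀ i, |(u - v) i| ≤ Lκ * D := by
    intro i
    have h1 := hLip x (xs i) x' (xs i)
    have h2 : Real.sqrt (‖x - x'‖ ^ 2 + ‖xs i - xs i‖ ^ 2) = D := by
      simp [Real.sqrt_sq (norm_nonneg _), hDdef]
    rw [h2] at h1
    exact h1
  have nu : ‖(WithLp.equiv 2 (Fin N → ℝ)).symm u‖ ≤ Real.sqrt N * κmax :=
    norm_le_of_ptwise u κmax hκmax hk
  have nv : ‖(WithLp.equiv 2 (Fin N → ℝ)).symm v‖ ≤ Real.sqrt N * κmax :=
    norm_le_of_ptwise v κmax hκmax hk'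
  have nd : ‖(WithLp.equiv 2 (Fin N → ℝ)).symm (u - v)‖ ≤ Real.sqrt N * (Lκ * D) :=
    norm_le_of_ptwise (u - v) (Lκ * D) (by positivity) hdk
  have t1 : |(u - v) ⬝ᵥ (B *ᵥ u)| ≤ (Real.sqrt N * (Lκ * D)) * (matOpNorm B * (Real.sqrt N * κmax)) := by
    refine (dot_mulVec_bound B (u - v) u).trans ?_
    gcongr
  have t2 : |v ⬝ᵥ (B *ᵥ (u - v))| ≤ (Real.sqrt N * κmax) * (matOpNorm B * (Real.sqrt N * (Lκ * D))) := by
    refine (dot_mulVec_bound B v (u - v)).trans ?_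
    gcongr
  have hdiag : |κ x x - κ x' x'| ≤ Lκ * (Real.sqrt 2 * D) := by
    have h1 := hLip x x x' x'
    have h2 : Real.sqrt (‖x - x'‖ ^ 2 + ‖x - x'‖ ^ 2) = Real.sqrt 2 * D := by
      rw [show ‖x - x'‖ ^ 2 + ‖x - x'‖ ^ 2 = 2 * D ^ 2 by ring,
        Real.sqrt_mul (by norm_num), Real.sqrt_sq hD.le]
    rw [h2] at h1
    exact h1
  have hid : postVar κ xs σn2 x - postVar κ xs σn2 x' =
      (κ x x - κ x' x') - ((u - v) ⬝ᵥ (B *ᵥ u) + v ⬝ᵥ (B *ᵥ (u - v))) := by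
    simp only [postVar, ← hBdef, ← hudef, ← hvdef, sub_dotProduct, dotProduct_sub, mulVec_sub]
    ring
  have htri : |postVar κ xs σn2 x - postVar κ xs σn2 x'| ≤
      |κ x x - κ x' x'| + (|(u - v) ⬝ᵥ (B *ᵥ u)| + |v ⬝ᵥ (B *ᵥ (u - v))|) := by
    rw [hid]
    refine (abs_sub _ _).trans ?_
    gcongr
    exact abs_add_le _ _
  have hNN : Real.sqrt N * Real.sqrt N = N := Real.mul_self_sqrt (Nat.cast_nonneg N)
  have hs2 : Real.sqrt 2 ≤ 2 := by
    nlinarith [Real.sq_sqrt (show (0:ℝ) ≤ 2 by norm_num), Real.sqrt_nonneg 2]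
  have e1 : Real.sqrt N * (Lκ * D) * (matOpNorm B * (Real.sqrt N * κmax)) =
      (N : ℝ) * matOpNorm B * κmax * (Lκ * D) := by
    linear_combination (Lκ * D * matOpNorm B * κmax) * hNN
  have e2 : Real.sqrt N * κmax * (matOpNorm B * (Real.sqrt N * (Lκ * D))) =
      (N : ℝ) * matOpNorm B * κmax * (Lκ * D) := by
    linear_combination (Lκ * D * matOpNorm B * κmax) * hNN
  rw [e1] at t1
  rw [e2] at t2
  have hsq : Lκ * (Real.sqrt 2 * D) ≤ 2 * (Lκ * D) := by
    nlinarith [mul_nonneg hL hD.le]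
  have hrhs : 2 * Lκ * (1 + (N : ℝ) * matOpNorm B * κmax) * D =
      2 * (Lκ * D) + 2 * ((N : ℝ) * matOpNorm B * κmax * (Lκ * D)) := by ring
  rw [hrhs]
  linarith
end
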